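/- In the 3x3 extended Battle-of-the-Sexes game \hat G with player 1 strategies {t,b,x} and player 2 strategies {l,r,y}, payoffs: (t,l)=(3,2), (t,r)=(0,0), (t,y)=(0,1), (b,l)=(0,0), (b,r)=(2,3), (b,y)=(-2,4), (x,l)=(1,0), (x,r)=(4,-2), (x,y)=(-1,-1), the pure profile (t,l) is the unique Nash equilibrium (in mixed strategies). -/

import Mathlib

open Finset

/-- Player 1's payoff matrix of the extended Battle-of-the-Sexes game `Ĝ`:
rows are `t, b, x`, columns are `l, r, y`. -/
noncomputable def GhatA : Fin 3 → Fin 3 → ℝ := ![![3, 0, 0], ![0, 2, -2], ![1, 4, -1]]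

/-- Player 2's payoff matrix. -/
noncomputable def GhatB : Fin 3 → Fin 3 → ℝ := ![![2, 0, 1], ![0, 3, 4], ![0, -2, -1]]

/-- `σ` is a mixed strategy over three pure strategies. -/
def IsMixed3 (σ : Fin 3 → ℝ) : Prop := (∀ i, 0 ≤ σ i) ∧ ∑ i, σ i = 1

/-- Expected payoff in a 3×3 bimatrix game. -/
noncomputable def pay3 (M : Fin 3 → Fin 3 → ℝ) (σ τ : Fin 3 → ℝ) : ℝ :=
  ∑ i, ∑ j, σ i * τ j * M i j

/-- `(σ, τ)` is a (mixed) Nash equilibrium of `Ĝ`. -/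
def IsNashGhat (σ τ : Fin 3 → ℝ) : Prop :=
  IsMixed3 σ ∧ IsMixed3 τ ∧
  (∀ σ', IsMixed3 σ' → pay3 GhatA σ' τ ≤ pay3 GhatA σ τ) ∧
  (∀ τ', IsMixed3 τ' → pay3 GhatB σ τ' ≤ pay3 GhatB σ τ)

/-- The pure strategy `t` (resp. `l`), as a mixed strategy. -/
noncomputable def pure0 : Fin 3 → ℝ := fun i => if i = 0 then 1 else 0

lemma mixed3_vec (x y z : ℝ) (hx : 0 ≤ x) (hy : 0 ≤ y) (hz : 0 ≤ z)
    (hs : x + y + z = 1) : IsMixed3 ![x, y, z] := by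
  constructor
  · intro i; fin_cases i <;> simpa
  · simp [Fin.sum_univ_three, hs]

lemma payA (σ τ : Fin 3 → ℝ) :
    pay3 GhatA σ τ = σ 0 * (3 * τ 0) + σ 1 * (2 * τ 1 - 2 * τ 2)
      + σ 2 * (τ 0 + 4 * τ 1 - τ 2) := by
  simp [pay3, Fin.sum_univ_three, GhatA]; ring

lemma payB (σ τ : Fin 3 → ℝ) :
    pay3 GhatB σ τ = τ 0 * (2 * σ 0) + τ 1 * (3 * σ 1 - 2 * σ 2)
      + τ 2 * (σ 0 + 4 * σ 1 - σ 2) := by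
  simp only [pay3, Fin.sum_univ_three]; norm_num [GhatB, Matrix.vecHead, Matrix.vecTail, Matrix.cons_val_two]; ring

lemma pure0_eq : pure0 = ![(1:ℝ), 0, 0] := by
  funext i; fin_cases i <;> simp [pure0]

theorem ghat_unique_equilibrium :
    IsNashGhat pure0 pure0 ∧
    ∀ σ τ : Fin 3 → ℝ, IsNashGhat σ τ → σ = pure0 ∧ τ = pure0 := by
  have hp0 : IsMixed3 pure0 := by
    constructor
    · intro i; simp [pure0]; split <;> norm_num
    · simp [pure0, Fin.sum_univ_three]
  constructor
  · refine ⟨hp0, hp0, ?_, ?_⟩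
    · intro σ' ⟨hn, hs⟩
      rw [payA, payA, pure0_eq]
      have h0 := hn 0; have h1 := hn 1; have h2 := hn 2
      rw [Fin.sum_univ_three] at hs
      norm_num [Matrix.cons_val_two]
      linarith
    · intro τ' ⟨hn, hs⟩
      rw [payB, payB, pure0_eq]
      have h0 := hn 0; have h1 := hn 1; have h2 := hn 2
      rw [Fin.sum_univ_three] at hs
      norm_num [Matrix.cons_val_two]
      linarith
  · rintro σ τ ⟨⟨hσn, hσs⟩, ⟨hτn, hτs⟩, h1, h2⟩
    rw [Fin.sum_univ_three] at hσs hτs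
    have hσ0 := hσn 0; have hσ1 := hσn 1; have hσ2 := hσn 2
    have hτ0 := hτn 0; have hτ1 := hτn 1; have hτ2 := hτn 2
    -- step 1 : σ 1 = 0 (row b dominated by row x)
    have hq : σ 1 = 0 := by
      have := h1 ![σ 0, 0, σ 1 + σ 2]
        (mixed3_vec _ _ _ hσ0 le_rfl (by linarith) (by linarith))
      rw [payA, payA] at this
      simp only [Matrix.cons_val_zero, Matrix.cons_val_one, Matrix.head_cons,
        Matrix.cons_val_two, Matrix.tail_cons] at this
      nlinarith [mul_nonneg hσ1 hτ1]
    -- step 2 : τ 1 = 0 (column r dominated by column y)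
    have hb : τ 1 = 0 := by
      have := h2 ![τ 0, 0, τ 1 + τ 2]
        (mixed3_vec _ _ _ hτ0 le_rfl (by linarith) (by linarith))
      rw [payB, payB] at this
      simp only [Matrix.cons_val_zero, Matrix.cons_val_one, Matrix.head_cons,
        Matrix.cons_val_two, Matrix.tail_cons] at this
      nlinarith [mul_nonneg hτ1 hσ2]
    -- step 3 : σ 2 = 0 (now row t dominates row x)
    have hr : σ 2 = 0 := by
      have := h1 ![σ 0 + σ 2, σ 1, 0]
        (mixed3_vec _ _ _ (by linarith) hσ1 le_rfl (by linarith))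
      rw [payA, payA] at this
      simp only [Matrix.cons_val_zero, Matrix.cons_val_one, Matrix.head_cons,
        Matrix.cons_val_two, Matrix.tail_cons] at this
      nlinarith [mul_nonneg hσ2 hτ0, mul_nonneg hσ2 hτ2]
    have hpone : σ 0 = 1 := by linarith
    -- step 4 : τ 2 = 0 and τ 0 = 1
    have hc : τ 2 = 0 := by
      have := h2 ![τ 0 + τ 2, τ 1, 0]
        (mixed3_vec _ _ _ (by linarith) hτ1 le_rfl (by linarith))
      rw [payB, payB] at this
      simp only [Matrix.cons_val_zero, Matrix.cons_val_one, Matrix.head_cons,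
        Matrix.cons_val_two, Matrix.tail_cons] at this
      nlinarith
    have haone : τ 0 = 1 := by linarith
    constructor
    · funext i; fin_cases i <;> simp [pure0, hpone, hq, hr]
    · funext i; fin_cases i <;> simp [pure0, haone, hb, hc]
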